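/- For a numerical semigroup S, the family 𝒜 consisting of ℕ together with all finite intersections ⋂ᵢ S/dᵢ with each dᵢ ∈ ℕ \ S is an arithmetic variety containing S, and it is the smallest arithmetic variety containing S. -/
import Mathlib


/-- A numerical semigroup: a submonoid of (ℕ,+) with finite complement. -/
def IsNumericalSemigroup (S : Set ℕ) : Prop :=
  0 ∈ S ∧ (∀ a ∈ S, ∀ b ∈ S, a + b ∈ S) ∧ Sᶜ.Finite

/-- The quotient S/d = {x ∈ ℕ : d*x ∈ S}. -/
def NumQuot (S : Set ℕ) (d : ℕ) : Set ℕ := {x | d * x ∈ S}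

/-- The Frobenius number of S (for S ≠ ℕ): the maximum of the complement. -/
noncomputable def frob (S : Set ℕ) : ℕ := sSup Sᶜ

/-- The multiplicity of S: the least positive element. -/
noncomputable def mult (S : Set ℕ) : ℕ := sInf (S \ {0})

/-- T is an arithmetic extension of S if T = {x : d₁x,...,dₙx ∈ S} for some
positive integers d₁,...,dₙ. -/
def IsArithmeticExtension (S T : Set ℕ) : Prop :=
  ∃ D : Finset ℕ, D.Nonempty ∧ (∀ d ∈ D, 0 < d) ∧ T = {x | ∀ d ∈ D, d * x ∈ S}

/-- An arithmetic variety: a nonempty family of numerical semigroups closed under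
pairwise intersections and arithmetic extensions. -/
def IsArithmeticVariety (𝒜 : Set (Set ℕ)) : Prop :=
  𝒜.Nonempty ∧ (∀ S ∈ 𝒜, IsNumericalSemigroup S) ∧
    (∀ S ∈ 𝒜, ∀ T ∈ 𝒜, S ∩ T ∈ 𝒜) ∧
    (∀ S ∈ 𝒜, ∀ T : Set ℕ, IsArithmeticExtension S T → T ∈ 𝒜)


lemma ns_mul_mem {S : Set ℕ} (hS : IsNumericalSemigroup S) {m : ℕ} (hm : m ∈ S) (k : ℕ) :
    k * m ∈ S := by
  induction k with
  | zero => simpa using hS.1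
  | succ n ih => rw [Nat.succ_mul]; exact hS.2.1 _ ih _ hm

lemma ns_univ : IsNumericalSemigroup (Set.univ : Set ℕ) := by
  refine ⟨trivial, fun _ _ _ _ => trivial, by simp⟩

lemma ns_binter {S : Set ℕ} (hS : IsNumericalSemigroup S) {D : Finset ℕ}
    (hD : D.Nonempty) (hd : ∀ d ∈ D, d ∉ S) :
    IsNumericalSemigroup (⋂ d ∈ D, NumQuot S d) := by
  refine ⟨?_, ?_, ?_⟩
  · simp only [Set.mem_iInter, NumQuot, Set.mem_setOf_eq, Nat.mul_zero]
    exact fun _ _ => hS.1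
  · intro a ha b hb
    simp only [Set.mem_iInter, NumQuot, Set.mem_setOf_eq] at *
    intro d hdD
    rw [Nat.mul_add]
    exact hS.2.1 _ (ha d hdD) _ (hb d hdD)
  · have hbdd : BddAbove Sᶜ := hS.2.2.bddAbove
    apply Set.Finite.subset (Set.finite_Iic (sSup Sᶜ))
    intro x hx
    simp only [Set.mem_compl_iff, Set.mem_iInter, not_forall] at hx
    obtain ⟨d, hdD, hdx⟩ := hx
    have hd1 : 1 ≤ d := by
      rcases Nat.eq_zero_or_pos d with h | h
      · exact absurd (h ▸ hS.1) (hd d hdD)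
      · exact h
    have : d * x ∈ Sᶜ := hdx
    calc x ≤ d * x := Nat.le_mul_of_pos_left x hd1
    _ ≤ sSup Sᶜ := le_csSup hbdd this

theorem smallest_variety_of_singleton (S : Set ℕ) (hS : IsNumericalSemigroup S) :
    IsArithmeticVariety
        ({T | ∃ D : Finset ℕ, D.Nonempty ∧ (∀ d ∈ D, d ∉ S) ∧
            T = ⋂ d ∈ D, NumQuot S d} ∪ {Set.univ}) ∧
      S ∈ ({T | ∃ D : Finset ℕ, D.Nonempty ∧ (∀ d ∈ D, d ∉ S) ∧
            T = ⋂ d ∈ D, NumQuot S d} ∪ {Set.univ}) ∧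
      ∀ ℬ : Set (Set ℕ), IsArithmeticVariety ℬ → S ∈ ℬ →
        ({T | ∃ D : Finset ℕ, D.Nonempty ∧ (∀ d ∈ D, d ∉ S) ∧
            T = ⋂ d ∈ D, NumQuot S d} ∪ {Set.univ}) ⊆ ℬ := by
  classical
  set 𝒜 : Set (Set ℕ) := ({T | ∃ D : Finset ℕ, D.Nonempty ∧ (∀ d ∈ D, d ∉ S) ∧
      T = ⋂ d ∈ D, NumQuot S d} ∪ {Set.univ}) with h𝒜
  have hpos : ∀ d ∉ S, 0 < d := by
    intro d hd
    rcases Nat.eq_zero_or_pos d with h | h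
    · exact absurd (h ▸ hS.1) hd
    · exact h
  refine ⟨⟨⟨Set.univ, Or.inr rfl⟩, ?_, ?_, ?_⟩, ?_, ?_⟩
  · -- every member is a numerical semigroup
    rintro T (⟨D, hD, hd, rfl⟩ | hT)
    · exact ns_binter hS hD hd
    · rw [Set.mem_singleton_iff] at hT; rw [hT]; exact ns_univ
  · -- intersections
    rintro T1 (⟨D1, hD1, hd1, rfl⟩ | hT1) T2 (⟨D2, hD2, hd2, rfl⟩ | hT2)
    · left
      refine ⟨D1 ∪ D2, hD1.mono Finset.subset_union_left, ?_, ?_⟩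
      · intro d hd
        rcases Finset.mem_union.mp hd with h | h
        · exact hd1 d h
        · exact hd2 d h
      · ext x
        simp only [Set.mem_inter_iff, Set.mem_iInter, Finset.mem_union]
        constructor
        · rintro ⟨h1, h2⟩ d (h | h)
          · exact h1 d h
          · exact h2 d h
        · intro h
          exact ⟨fun d hd => h d (Or.inl hd), fun d hd => h d (Or.inr hd)⟩
    · rw [Set.mem_singleton_iff] at hT2; rw [hT2, Set.inter_univ]
      exact Or.inl ⟨D1, hD1, hd1, rfl⟩
    · rw [Set.mem_singleton_iff] at hT1; rw [hT1, Set.univ_inter]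
      exact Or.inl ⟨D2, hD2, hd2, rfl⟩
    · rw [Set.mem_singleton_iff] at hT1 hT2; rw [hT1, hT2, Set.univ_inter]
      exact Or.inr rfl
  · -- arithmetic extensions
    rintro A (⟨D, hD, hd, rfl⟩ | hA) T ⟨E, hE, hEpos, rfl⟩
    · set F : Finset ℕ := ((D ×ˢ E).image fun p => p.1 * p.2).filter (· ∉ S) with hF
      have key : ∀ x : ℕ, (∀ e ∈ E, e * x ∈ ⋂ d ∈ D, NumQuot S d) ↔ ∀ c ∈ F, c * x ∈ S := by
        intro x
        constructor
        · intro h c hc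
          rw [hF, Finset.mem_filter, Finset.mem_image] at hc
          obtain ⟨⟨p, hp, rfl⟩, hcS⟩ := hc
          rw [Finset.mem_product] at hp
          have h1 := h p.2 hp.2
          simp only [Set.mem_iInter] at h1
          have h2 := h1 p.1 hp.1
          simp only [NumQuot, Set.mem_setOf_eq] at h2
          have heq : p.1 * p.2 * x = p.1 * (p.2 * x) := by ring
          rw [heq]; exact h2
        · intro h e he
          rw [Set.mem_iInter]
          intro d
          rw [Set.mem_iInter]
          intro hdD
          show d * (e * x) ∈ S
          by_cases hde : d * e ∈ S
          · have := ns_mul_mem hS hde x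
            have heq : d * (e * x) = x * (d * e) := by ring
            rw [heq]; exact this
          · have hmem : d * e ∈ F := by
              rw [hF, Finset.mem_filter, Finset.mem_image]
              exact ⟨⟨(d, e), Finset.mem_product.mpr ⟨hdD, he⟩, rfl⟩, hde⟩
            have := h (d * e) hmem
            rwa [mul_assoc] at this
      rcases Finset.eq_empty_or_nonempty F with hFe | hFne
      · right
        rw [Set.mem_singleton_iff]
        ext x
        simp only [Set.mem_setOf_eq, Set.mem_univ, iff_true]
        intro e he
        exact (key x).mpr (by simp [hFe]) e he
      · left
        refine ⟨F, hFne, ?_, ?_⟩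
        · intro c hc
          rw [hF, Finset.mem_filter] at hc
          exact hc.2
        · ext x
          rw [Set.mem_iInter₂]
          have := key x
          simp only [Set.mem_setOf_eq, NumQuot] at this ⊢
          exact this
    · rw [Set.mem_singleton_iff] at hA
      right
      rw [Set.mem_singleton_iff]
      ext x
      simp [hA]
  · -- S ∈ 𝒜
    by_cases h1 : 1 ∈ S
    · right
      rw [Set.mem_singleton_iff]
      ext x
      simp only [Set.mem_univ, iff_true]
      have := ns_mul_mem hS h1 x
      simpa using this
    · left
      refine ⟨{1}, ⟨1, Finset.mem_singleton_self 1⟩, by simpa using h1, ?_⟩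
      ext x
      simp [NumQuot]
  · -- minimality
    rintro ℬ ⟨_, _, _, hext⟩ hSB T hT
    rcases hT with ⟨D, hD, hd, rfl⟩ | hT
    · apply hext S hSB
      refine ⟨D, hD, fun d hdD => hpos d (hd d hdD), ?_⟩
      ext x
      simp [NumQuot]
    · rw [Set.mem_singleton_iff] at hT
      rw [hT]
      obtain ⟨m, hmS, hm0⟩ : ∃ m ∈ S, 0 < m := by
        have hinf : S.Infinite := by simpa using hS.2.2.infinite_compl
        obtain ⟨m, hm⟩ := (hinf.diff (Set.finite_singleton 0)).nonempty
        exact ⟨m, hm.1, Nat.pos_of_ne_zero (by simpa using hm.2)⟩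
      apply hext S hSB
      refine ⟨{m}, ⟨m, Finset.mem_singleton_self m⟩, by simpa using hm0, ?_⟩
      ext x
      simp only [Set.mem_univ, Finset.mem_singleton, Set.mem_setOf_eq, true_iff]
      rintro d rfl
      have := ns_mul_mem hS hmS x
      rwa [mul_comm] at this
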